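/- Let Λ ⊆ ℝ^K \ {0} be a nonempty set of nonzero vectors, t ∈ ℝ^K, and let C ⊆ ℝ^N be a convex set such that Σ(ρ) is positive definite for every ρ ∈ C. Assume that for each ρ ∈ C the set { f(λ, ρ) : λ ∈ Λ } is bounded above, where f(λ, ρ) = max(0, λᵀ(t − μ(ρ)))² / (λᵀ Σ(ρ) λ). Then the function g(ρ) = sup_{λ ∈ Λ} f(λ, ρ) is convex on C. (Proposition 1) -/

import Mathlib

open Matrix

/-- The mean vector `μ(ρ)_k = Σ_i Σ_j q_{ijk} ρ_{ij}`. -/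
noncomputable def muVec {I K : ℕ} (n : Fin I → ℕ)
    (q : (i : Fin I) → Fin (n i) → Fin K → ℝ)
    (ρ : (i : Fin I) → Fin (n i) → ℝ) : Fin K → ℝ :=
  fun k => ∑ i, ∑ j, q i j k * ρ i j

/-- The K×K covariance matrix `Σ(ρ)`. -/
noncomputable def SigmaMat {I K : ℕ} (n : Fin I → ℕ)
    (q : (i : Fin I) → Fin (n i) → Fin K → ℝ)
    (ρ : (i : Fin I) → Fin (n i) → ℝ) : Matrix (Fin K) (Fin K) ℝ :=
  Matrix.of fun k l => ∑ i, ((∑ j, q i j k * q i j l * ρ i j)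
    - (∑ j, q i j k * ρ i j) * (∑ j, q i j l * ρ i j))

/-- The objective `f(λ, ρ) = max(0, λᵀ(t − μ(ρ)))² / (λᵀ Σ(ρ) λ)`. -/
noncomputable def objF {I K : ℕ} (n : Fin I → ℕ)
    (q : (i : Fin I) → Fin (n i) → Fin K → ℝ) (t : Fin K → ℝ)
    (lam : Fin K → ℝ) (ρ : (i : Fin I) → Fin (n i) → ℝ) : ℝ :=
  (max 0 (lam ⬝ᵥ (t - muVec n q ρ))) ^ 2 / (lam ⬝ᵥ (SigmaMat n q ρ) *ᵥ lam)

/-- The quadratic form of `Σ(ρ)` in scalar form. -/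
theorem quadform {I K : ℕ} (n : Fin I → ℕ)
    (q : (i : Fin I) → Fin (n i) → Fin K → ℝ) (lam : Fin K → ℝ)
    (ρ : (i : Fin I) → Fin (n i) → ℝ) :
    lam ⬝ᵥ (SigmaMat n q ρ) *ᵥ lam
    = ∑ i, ((∑ j, (∑ k, lam k * q i j k)^2 * ρ i j)
      - (∑ j, (∑ k, lam k * q i j k) * ρ i j)^2) := by
  have h1 : ∀ i, ∑ j, (∑ k, lam k * q i j k)^2 * ρ i j
      = ∑ k, ∑ l, lam k * ((∑ j, q i j k * q i j l * ρ i j) * lam l) := by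
    intro i
    have step : ∀ k : Fin K, ∑ l, lam k * ((∑ j, q i j k * q i j l * ρ i j) * lam l)
        = ∑ j, ∑ l, lam k * q i j k * (lam l * q i j l) * ρ i j := by
      intro k
      simp only [Finset.sum_mul, Finset.mul_sum]
      rw [Finset.sum_comm]
      exact Finset.sum_congr rfl fun j _ => Finset.sum_congr rfl fun l _ => by ring
    rw [Finset.sum_congr rfl fun k (_ : k ∈ Finset.univ) => step k, Finset.sum_comm]
    refine Finset.sum_congr rfl fun j _ => ?_
    rw [sq, Finset.sum_mul_sum, Finset.sum_mul]
    exact Finset.sum_congr rfl fun k _ => by rw [Finset.sum_mul]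
  have e : ∀ i, ∑ j, (∑ k, lam k * q i j k) * ρ i j = ∑ k, lam k * ∑ j, q i j k * ρ i j := by
    intro i
    have step : ∀ j, (∑ k, lam k * q i j k) * ρ i j = ∑ k, lam k * (q i j k * ρ i j) := by
      intro j
      rw [Finset.sum_mul]
      exact Finset.sum_congr rfl fun k _ => by ring
    rw [Finset.sum_congr rfl fun j (_ : j ∈ Finset.univ) => step j, Finset.sum_comm]
    exact Finset.sum_congr rfl fun k _ => by rw [Finset.mul_sum]
  have h2 : ∀ i, (∑ j, (∑ k, lam k * q i j k) * ρ i j)^2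
      = ∑ k, ∑ l, lam k * ((∑ j, q i j k * ρ i j) * ((∑ j, q i j l * ρ i j) * lam l)) := by
    intro i
    rw [e i, sq, Finset.sum_mul_sum]
    exact Finset.sum_congr rfl fun k _ => Finset.sum_congr rfl fun l _ => by ring
  calc lam ⬝ᵥ (SigmaMat n q ρ) *ᵥ lam
      = ∑ k, ∑ l, lam k * (SigmaMat n q ρ k l * lam l) := by
        simp [dotProduct, mulVec, Finset.mul_sum]
    _ = ∑ k, ∑ l, ∑ i, lam k * (((∑ j, q i j k * q i j l * ρ i j)
          - (∑ j, q i j k * ρ i j) * (∑ j, q i j l * ρ i j)) * lam l) := by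
        refine Finset.sum_congr rfl fun k _ => Finset.sum_congr rfl fun l _ => ?_
        simp only [SigmaMat, Matrix.of_apply, Finset.sum_mul, Finset.mul_sum]
    _ = ∑ i, ∑ k, ∑ l, lam k * (((∑ j, q i j k * q i j l * ρ i j)
          - (∑ j, q i j k * ρ i j) * (∑ j, q i j l * ρ i j)) * lam l) := by
        rw [Finset.sum_congr rfl fun k (_ : k ∈ Finset.univ) => Finset.sum_comm, Finset.sum_comm]
    _ = ∑ i, ((∑ j, (∑ k, lam k * q i j k)^2 * ρ i j)
          - (∑ j, (∑ k, lam k * q i j k) * ρ i j)^2) := by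
        refine Finset.sum_congr rfl fun i _ => ?_
        rw [h1 i, h2 i, ← Finset.sum_sub_distrib]
        refine Finset.sum_congr rfl fun k _ => ?_
        rw [← Finset.sum_sub_distrib]
        exact Finset.sum_congr rfl fun l _ => by ring

/-- For each fixed nonzero `λ`, `ρ ↦ f(λ, ρ)` is convex on `C`. -/
theorem objF_convexOn {I K : ℕ} (n : Fin I → ℕ)
    (q : (i : Fin I) → Fin (n i) → Fin K → ℝ) (t : Fin K → ℝ)
    (lam : Fin K → ℝ) (hlam : lam ≠ 0)
    (C : Set ((i : Fin I) → Fin (n i) → ℝ)) (hC : Convex ℝ C)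
    (hpd : ∀ ρ ∈ C, (SigmaMat n q ρ).PosDef) :
    ConvexOn ℝ C (objF n q t lam) := by
  refine ⟨hC, fun ρ₁ hρ₁ ρ₂ hρ₂ a b ha hb hab => ?_⟩
  set z := a • ρ₁ + b • ρ₂ with hz
  have hzC : z ∈ C := hC hρ₁ hρ₂ ha hb hab
  have hzij : ∀ i j, z i j = a * ρ₁ i j + b * ρ₂ i j := by
    intro i j; simp [hz, Pi.add_apply, Pi.smul_apply]
  -- positivity of the quadratic forms
  have hSpos : ∀ ρ ∈ C, 0 < lam ⬝ᵥ (SigmaMat n q ρ) *ᵥ lam := by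
    intro ρ hρ
    have := (Matrix.posDef_iff_dotProduct_mulVec.mp (hpd ρ hρ)).2 hlam
    simpa using this
  have hs₁ : 0 < lam ⬝ᵥ (SigmaMat n q ρ₁) *ᵥ lam := hSpos ρ₁ hρ₁
  have hs₂ : 0 < lam ⬝ᵥ (SigmaMat n q ρ₂) *ᵥ lam := hSpos ρ₂ hρ₂
  have hsz : 0 < lam ⬝ᵥ (SigmaMat n q z) *ᵥ lam := hSpos z hzC
  set s₁ := lam ⬝ᵥ (SigmaMat n q ρ₁) *ᵥ lam
  set s₂ := lam ⬝ᵥ (SigmaMat n q ρ₂) *ᵥ lam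
  set sz := lam ⬝ᵥ (SigmaMat n q z) *ᵥ lam
  -- concavity of the quadratic form
  have hconc : a * s₁ + b * s₂ ≤ sz := by
    rw [show s₁ = _ from quadform n q lam ρ₁, show s₂ = _ from quadform n q lam ρ₂,
      show sz = _ from quadform n q lam z, Finset.mul_sum, Finset.mul_sum,
      ← Finset.sum_add_distrib]
    refine Finset.sum_le_sum fun i _ => ?_
    have lin1 : ∑ j, (∑ k, lam k * q i j k)^2 * z i j
        = a * ∑ j, (∑ k, lam k * q i j k)^2 * ρ₁ i j
          + b * ∑ j, (∑ k, lam k * q i j k)^2 * ρ₂ i j := by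
      rw [Finset.mul_sum, Finset.mul_sum, ← Finset.sum_add_distrib]
      exact Finset.sum_congr rfl fun j _ => by rw [hzij i j]; ring
    have lin2 : ∑ j, (∑ k, lam k * q i j k) * z i j
        = a * ∑ j, (∑ k, lam k * q i j k) * ρ₁ i j
          + b * ∑ j, (∑ k, lam k * q i j k) * ρ₂ i j := by
      rw [Finset.mul_sum, Finset.mul_sum, ← Finset.sum_add_distrib]
      exact Finset.sum_congr rfl fun j _ => by rw [hzij i j]; ring
    rw [lin1, lin2]
    set L₁ := ∑ j, (∑ k, lam k * q i j k)^2 * ρ₁ i j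
    set L₂ := ∑ j, (∑ k, lam k * q i j k)^2 * ρ₂ i j
    set D₁ := ∑ j, (∑ k, lam k * q i j k) * ρ₁ i j
    set D₂ := ∑ j, (∑ k, lam k * q i j k) * ρ₂ i j
    nlinarith [mul_nonneg (mul_nonneg ha hb) (sq_nonneg (D₁ - D₂)), sq_nonneg (D₁ - D₂)]
  -- linearity of the mean part
  have hmu : ∀ k, muVec n q z k = a * muVec n q ρ₁ k + b * muVec n q ρ₂ k := by
    intro k
    simp only [muVec, Finset.mul_sum, ← Finset.sum_add_distrib]
    exact Finset.sum_congr rfl fun i _ => Finset.sum_congr rfl fun j _ => by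
      rw [hzij i j]; ring
  have hm : lam ⬝ᵥ (t - muVec n q z)
      = a * (lam ⬝ᵥ (t - muVec n q ρ₁)) + b * (lam ⬝ᵥ (t - muVec n q ρ₂)) := by
    simp only [dotProduct, Pi.sub_apply, Finset.mul_sum, ← Finset.sum_add_distrib]
    refine Finset.sum_congr rfl fun k _ => ?_
    rw [hmu k]
    linear_combination (-(lam k * t k)) * hab
  set x₁ := max 0 (lam ⬝ᵥ (t - muVec n q ρ₁)) with hx₁
  set x₂ := max 0 (lam ⬝ᵥ (t - muVec n q ρ₂)) with hx₂
  have hx₁0 : 0 ≤ x₁ := le_max_left _ _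
  have hx₂0 : 0 ≤ x₂ := le_max_left _ _
  have hxz : max 0 (lam ⬝ᵥ (t - muVec n q z)) ≤ a * x₁ + b * x₂ := by
    apply max_le
    · positivity
    · rw [hm]
      have h1 : lam ⬝ᵥ (t - muVec n q ρ₁) ≤ x₁ := le_max_right _ _
      have h2 : lam ⬝ᵥ (t - muVec n q ρ₂) ≤ x₂ := le_max_right _ _
      have := add_le_add (mul_le_mul_of_nonneg_left h1 ha) (mul_le_mul_of_nonneg_left h2 hb)
      linarith
  -- put it together
  have hcs : 0 < a * s₁ + b * s₂ := by
    rcases eq_or_lt_of_le ha with h | h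
    · have hb1 : b = 1 := by linarith
      rw [← h, hb1]
      simpa using hs₂
    · have h1 : 0 < a * s₁ := mul_pos h hs₁
      have h2 : 0 ≤ b * s₂ := mul_nonneg hb hs₂.le
      linarith
  show (max 0 (lam ⬝ᵥ (t - muVec n q z))) ^ 2 / sz
      ≤ a * ((max 0 (lam ⬝ᵥ (t - muVec n q ρ₁))) ^ 2 / s₁)
        + b * ((max 0 (lam ⬝ᵥ (t - muVec n q ρ₂))) ^ 2 / s₂)
  rw [← hx₁, ← hx₂]
  have step1 : (max 0 (lam ⬝ᵥ (t - muVec n q z))) ^ 2 / sz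
      ≤ (a * x₁ + b * x₂) ^ 2 / (a * s₁ + b * s₂) := by
    apply div_le_div₀ (by positivity) _ hcs hconc
    exact pow_le_pow_left₀ (le_max_left _ _) hxz 2
  refine step1.trans ?_
  have key : (a * x₁ + b * x₂) ^ 2 * (s₁ * s₂)
      ≤ (a * x₁ ^ 2 * s₂ + b * x₂ ^ 2 * s₁) * (a * s₁ + b * s₂) := by
    nlinarith [mul_nonneg (mul_nonneg ha hb) (sq_nonneg (x₁ * s₂ - x₂ * s₁))]
  have hrhs : a * (x₁ ^ 2 / s₁) + b * (x₂ ^ 2 / s₂)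
      = (a * x₁ ^ 2 * s₂ + b * x₂ ^ 2 * s₁) / (s₁ * s₂) := by
    field_simp
  rw [hrhs, div_le_div_iff₀ hcs (by positivity)]
  linarith [key]

theorem stmt4 {I K : ℕ} (n : Fin I → ℕ)
    (q : (i : Fin I) → Fin (n i) → Fin K → ℝ)
    (Λ : Set (Fin K → ℝ)) (hΛne : Λ.Nonempty) (hΛ0 : (0 : Fin K → ℝ) ∉ Λ)
    (t : Fin K → ℝ)
    (C : Set ((i : Fin I) → Fin (n i) → ℝ)) (hC : Convex ℝ C)
    (hpd : ∀ ρ ∈ C, (SigmaMat n q ρ).PosDef)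
    (hbdd : ∀ ρ ∈ C, BddAbove ((fun lam => objF n q t lam ρ) '' Λ)) :
    ConvexOn ℝ C (fun ρ => sSup ((fun lam => objF n q t lam ρ) '' Λ)) := by
  have hconv : ∀ lam ∈ Λ, ConvexOn ℝ C (objF n q t lam) := fun lam hlam =>
    objF_convexOn n q t lam (fun h => hΛ0 (h ▸ hlam)) C hC hpd
  refine ⟨hC, fun ρ₁ hρ₁ ρ₂ hρ₂ a b ha hb hab => ?_⟩
  have hzC : a • ρ₁ + b • ρ₂ ∈ C := hC hρ₁ hρ₂ ha hb hab
  refine csSup_le (hΛne.image _) ?_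
  rintro v ⟨lam, hlam, rfl⟩
  have h1 : objF n q t lam ρ₁ ≤ sSup ((fun lam => objF n q t lam ρ₁) '' Λ) :=
    le_csSup (hbdd ρ₁ hρ₁) (Set.mem_image_of_mem _ hlam)
  have h2 : objF n q t lam ρ₂ ≤ sSup ((fun lam => objF n q t lam ρ₂) '' Λ) :=
    le_csSup (hbdd ρ₂ hρ₂) (Set.mem_image_of_mem _ hlam)
  have h0 := (hconv lam hlam).2 hρ₁ hρ₂ ha hb hab
  calc objF n q t lam (a • ρ₁ + b • ρ₂)
      ≤ a * objF n q t lam ρ₁ + b * objF n q t lam ρ₂ := by simpa using h0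
    _ ≤ a * sSup ((fun lam => objF n q t lam ρ₁) '' Λ)
        + b * sSup ((fun lam => objF n q t lam ρ₂) '' Λ) :=
      add_le_add (mul_le_mul_of_nonneg_left h1 ha) (mul_le_mul_of_nonneg_left h2 hb)
    _ = a • sSup ((fun lam => objF n q t lam ρ₁) '' Λ)
        + b • sSup ((fun lam => objF n q t lam ρ₂) '' Λ) := by simp
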